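/- For x > 0 and λ ∈ ℝ with λ² ≠ x, the pointwise limit lim_{ε→0⁺} (ε − iλ)/√((ε − iλ)² + x) equals |λ|/√(λ² − x) if λ² > x, and equals −i λ/√(x − λ²) if λ² < x, where the square root is the principal branch. -/

import Mathlib

open Filter Topology

private lemma sqrt_as_complex (c : ℝ) (hc : 0 < c) :
    ((c : ℂ)) ^ (1 / 2 : ℂ) = ((Real.sqrt c : ℝ) : ℂ) := by
  rw [Real.sqrt_eq_rpow, Complex.ofReal_cpow hc.le]
  norm_num

private lemma exp_half_log (c : ℝ) (hc : 0 < c) :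
    Complex.exp ((Real.log c : ℂ) * (1 / 2 : ℂ)) = ((Real.sqrt c : ℝ) : ℂ) := by
  have h : (Real.log c : ℂ) * (1 / 2 : ℂ) = ((Real.log c / 2 : ℝ) : ℂ) := by push_cast; ring
  rw [h, ← Complex.ofReal_exp, ← Real.log_sqrt hc.le,
    Real.exp_log (Real.sqrt_pos.mpr hc)]

theorem stmt8 (x lam : ℝ) (hx : 0 < x) (hne : lam ^ 2 ≠ x) :
    (lam ^ 2 > x →
      Tendsto (fun ε : ℝ =>
          ((ε : ℂ) - Complex.I * lam) / (((ε : ℂ) - Complex.I * lam) ^ 2 + x) ^ (1 / 2 : ℂ))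
        (nhdsWithin 0 (Set.Ioi 0))
        (nhds ((|lam| : ℝ) / (Real.sqrt (lam ^ 2 - x) : ℝ))))
    ∧ (lam ^ 2 < x →
      Tendsto (fun ε : ℝ =>
          ((ε : ℂ) - Complex.I * lam) / (((ε : ℂ) - Complex.I * lam) ^ 2 + x) ^ (1 / 2 : ℂ))
        (nhdsWithin 0 (Set.Ioi 0))
        (nhds (-(Complex.I * lam) / (Real.sqrt (x - lam ^ 2) : ℝ)))) := by
  -- numerator tendsto
  have hnum : Tendsto (fun ε : ℝ => ((ε : ℂ) - Complex.I * lam))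
      (nhdsWithin 0 (Set.Ioi 0)) (nhds (-(Complex.I * lam))) := by
    have h : ContinuousAt (fun ε : ℝ => ((ε : ℂ) - Complex.I * lam)) 0 := by
      fun_prop
    simpa using h.tendsto.mono_left nhdsWithin_le_nhds
  -- inner function tendsto (to nhds of x - lam^2)
  have hval : ((0 : ℂ) - Complex.I * lam) ^ 2 + (x : ℂ) = ((x - lam ^ 2 : ℝ) : ℂ) := by
    have : (Complex.I : ℂ) ^ 2 = -1 := Complex.I_sq
    push_cast
    ring_nf
    rw [Complex.I_sq]
    ring
  have hg : Tendsto (fun ε : ℝ => ((ε : ℂ) - Complex.I * lam) ^ 2 + (x : ℂ))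
      (nhdsWithin 0 (Set.Ioi 0)) (nhds (((x - lam ^ 2 : ℝ) : ℂ))) := by
    have h : ContinuousAt (fun ε : ℝ => ((ε : ℂ) - Complex.I * lam) ^ 2 + (x : ℂ)) 0 := by
      fun_prop
    have h2 := h.tendsto.mono_left (nhdsWithin_le_nhds (s := Set.Ioi (0:ℝ)))
    rw [Complex.ofReal_zero, hval] at h2
    exact h2
  -- imaginary part of the inner function
  have him : ∀ ε : ℝ, (((ε : ℂ) - Complex.I * lam) ^ 2 + (x : ℂ)).im = -(2 * ε * lam) := by
    intro ε
    simp [pow_two, Complex.mul_im, Complex.mul_re, Complex.sub_re, Complex.sub_im]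
    ring
  constructor
  · -- case lam ^ 2 > x
    intro hgt
    have hc : 0 < lam ^ 2 - x := by linarith
    have hlam : lam ≠ 0 := by
      intro h; rw [h] at hgt; simp at hgt; linarith
    -- the target point z0
    set z0 : ℂ := ((x - lam ^ 2 : ℝ) : ℂ) with hz0
    have hz0re : z0.re < 0 := by rw [hz0, Complex.ofReal_re]; linarith
    have hz0im : z0.im = 0 := by rw [hz0, Complex.ofReal_im]
    have habs : ‖z0‖ = lam ^ 2 - x := by
      rw [hz0, Complex.norm_real, Real.norm_eq_abs, abs_of_neg (by linarith)]
      ring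
    -- eventually the inner function is nonzero
    have hne0 : ∀ᶠ ε : ℝ in nhdsWithin 0 (Set.Ioi 0),
        ((ε : ℂ) - Complex.I * lam) ^ 2 + (x : ℂ) ≠ 0 := by
      filter_upwards [eventually_mem_nhdsWithin] with ε (hε : 0 < ε)
      intro h
      have := him ε
      rw [h] at this
      simp at this
      rcases this with h | h
      · exact hε.ne' h
      · exact hlam h
    rcases lt_or_gt_of_ne hlam with hneg | hpos
    · -- lam < 0 : approach from above
      have hmem : ∀ᶠ ε : ℝ in nhdsWithin 0 (Set.Ioi 0),
          ((ε : ℂ) - Complex.I * lam) ^ 2 + (x : ℂ) ∈ {z : ℂ | 0 ≤ z.im} := by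
        filter_upwards [eventually_mem_nhdsWithin] with ε (hε : 0 < ε)
        simp only [Set.mem_setOf_eq, him ε]
        nlinarith
      have hgW : Tendsto (fun ε : ℝ => ((ε : ℂ) - Complex.I * lam) ^ 2 + (x : ℂ))
          (nhdsWithin 0 (Set.Ioi 0)) (nhdsWithin z0 {z : ℂ | 0 ≤ z.im}) :=
        tendsto_nhdsWithin_iff.mpr ⟨hg, hmem⟩
      have hlog := (Complex.tendsto_log_nhdsWithin_im_nonneg_of_re_neg_of_im_zero
        hz0re hz0im).comp hgW
      rw [habs] at hlog
      have hden : Tendsto (fun ε : ℝ =>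
          (((ε : ℂ) - Complex.I * lam) ^ 2 + (x : ℂ)) ^ (1 / 2 : ℂ))
          (nhdsWithin 0 (Set.Ioi 0))
          (nhds (Complex.exp (((Real.log (lam ^ 2 - x) : ℂ) + Real.pi * Complex.I) * (1 / 2 : ℂ)))) := by
        refine Tendsto.congr' ?_ ((Complex.continuous_exp.tendsto _).comp (hlog.mul_const (1/2 : ℂ)))
        filter_upwards [hne0] with ε hε
        simp [Complex.cpow_def_of_ne_zero hε, Function.comp]
      have hexp : Complex.exp (((Real.log (lam ^ 2 - x) : ℂ) + Real.pi * Complex.I) * (1 / 2 : ℂ))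
          = Complex.I * ((Real.sqrt (lam ^ 2 - x) : ℝ) : ℂ) := by
        rw [add_mul, Complex.exp_add, exp_half_log _ hc]
        have : ((Real.pi : ℂ) * Complex.I) * (1 / 2 : ℂ) = ((Real.pi / 2 : ℝ) : ℂ) * Complex.I := by
          push_cast; ring
        rw [this, Complex.exp_mul_I, ← Complex.ofReal_cos, ← Complex.ofReal_sin,
          Real.cos_pi_div_two, Real.sin_pi_div_two]
        push_cast
        ring
      rw [hexp] at hden
      have hsq : (0:ℝ) < Real.sqrt (lam ^ 2 - x) := Real.sqrt_pos.mpr hc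
      have hdne : Complex.I * ((Real.sqrt (lam ^ 2 - x) : ℝ) : ℂ) ≠ 0 := by
        simp [Complex.I_ne_zero, Complex.ofReal_ne_zero, hsq.ne']
      have := hnum.div hden hdne
      convert this using 2
      · rfl
      push_cast
      rw [div_eq_div_iff (by exact_mod_cast hsq.ne' :
          ((Real.sqrt (lam ^ 2 - x) : ℝ) : ℂ) ≠ 0) hdne, abs_of_neg hneg]
      push_cast
      ring
    · -- lam > 0 : approach from below
      have hmem : ∀ᶠ ε : ℝ in nhdsWithin 0 (Set.Ioi 0),
          ((ε : ℂ) - Complex.I * lam) ^ 2 + (x : ℂ) ∈ {z : ℂ | z.im < 0} := by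
        filter_upwards [eventually_mem_nhdsWithin] with ε (hε : 0 < ε)
        simp only [Set.mem_setOf_eq, him ε]
        nlinarith
      have hgW : Tendsto (fun ε : ℝ => ((ε : ℂ) - Complex.I * lam) ^ 2 + (x : ℂ))
          (nhdsWithin 0 (Set.Ioi 0)) (nhdsWithin z0 {z : ℂ | z.im < 0}) :=
        tendsto_nhdsWithin_iff.mpr ⟨hg, hmem⟩
      have hlog := (Complex.tendsto_log_nhdsWithin_im_neg_of_re_neg_of_im_zero
        hz0re hz0im).comp hgW
      rw [habs] at hlog
      have hden : Tendsto (fun ε : ℝ =>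
          (((ε : ℂ) - Complex.I * lam) ^ 2 + (x : ℂ)) ^ (1 / 2 : ℂ))
          (nhdsWithin 0 (Set.Ioi 0))
          (nhds (Complex.exp (((Real.log (lam ^ 2 - x) : ℂ) - Real.pi * Complex.I) * (1 / 2 : ℂ)))) := by
        refine Tendsto.congr' ?_ ((Complex.continuous_exp.tendsto _).comp (hlog.mul_const (1/2 : ℂ)))
        filter_upwards [hne0] with ε hε
        simp [Complex.cpow_def_of_ne_zero hε, Function.comp]
      have hexp : Complex.exp (((Real.log (lam ^ 2 - x) : ℂ) - Real.pi * Complex.I) * (1 / 2 : ℂ))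
          = -Complex.I * ((Real.sqrt (lam ^ 2 - x) : ℝ) : ℂ) := by
        rw [sub_mul, Complex.exp_sub, exp_half_log _ hc]
        have : ((Real.pi : ℂ) * Complex.I) * (1 / 2 : ℂ) = ((Real.pi / 2 : ℝ) : ℂ) * Complex.I := by
          push_cast; ring
        rw [this, Complex.exp_mul_I, ← Complex.ofReal_cos, ← Complex.ofReal_sin,
          Real.cos_pi_div_two, Real.sin_pi_div_two]
        push_cast
        rw [zero_add, one_mul, div_eq_mul_inv, Complex.inv_I]
        ring
      rw [hexp] at hden
      have hsq : (0:ℝ) < Real.sqrt (lam ^ 2 - x) := Real.sqrt_pos.mpr hc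
      have hdne : -Complex.I * ((Real.sqrt (lam ^ 2 - x) : ℝ) : ℂ) ≠ 0 := by
        simp [Complex.I_ne_zero, Complex.ofReal_ne_zero, hsq.ne']
      have := hnum.div hden hdne
      convert this using 2
      · rfl
      push_cast
      rw [div_eq_div_iff (by exact_mod_cast hsq.ne' :
          ((Real.sqrt (lam ^ 2 - x) : ℝ) : ℂ) ≠ 0) hdne, abs_of_pos hpos]
      push_cast
      ring
  · -- case lam ^ 2 < x
    intro hlt
    have hc : 0 < x - lam ^ 2 := by linarith
    have hcont : ContinuousAt (fun z : ℂ => z ^ (1 / 2 : ℂ)) ((x - lam ^ 2 : ℝ) : ℂ) := by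
      apply continuousAt_cpow_const
      rw [Complex.mem_slitPlane_iff]
      left
      rw [Complex.ofReal_re]
      linarith
    have hden := (hcont.tendsto.comp hg)
    rw [show ((((x - lam ^ 2 : ℝ)) : ℂ)) ^ (1 / 2 : ℂ) = ((Real.sqrt (x - lam ^ 2) : ℝ) : ℂ)
      from sqrt_as_complex _ hc] at hden
    have hsq : (0:ℝ) < Real.sqrt (x - lam ^ 2) := Real.sqrt_pos.mpr hc
    have hdne : ((Real.sqrt (x - lam ^ 2) : ℝ) : ℂ) ≠ 0 := by
      exact_mod_cast hsq.ne'
    exact hnum.div hden hdne
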